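/- Let P : ℝ → ℝ be convex, let β ∈ ℝ, y > 0, L ≥ 0 and ε ≥ 0, and let f : ℝ → ℝ be twice differentiable on [β−y, β+y] with |f''(t)| ≤ L for all t ∈ [β−y, β+y]. Assume P(t) ≤ f(t) for all t ∈ [β−y, β+y] and f(β) − P(β) ≤ ε. Then every subgradient a of P at β (i.e., every a with a·(t−β) ≤ P(t) − P(β) for all t ∈ ℝ) satisfies f'(β) − Ly/2 − ε/y ≤ a ≤ f'(β) + Ly/2 + ε/y. -/

import Mathlib

open Set

/-- Let `P` be convex, `y > 0`, `L ≥ 0`, `ε ≥ 0`, and let `f` be twice differentiable on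
`[β-y, β+y]` with `|f''| ≤ L` there. If `P ≤ f` on `[β-y, β+y]` and `f β - P β ≤ ε`,
then every subgradient `a` of `P` at `β` satisfies
`f'(β) - Ly/2 - ε/y ≤ a ≤ f'(β) + Ly/2 + ε/y`. -/
theorem subgradient_close_to_deriv_of_smooth_majorant
    (P f : ℝ → ℝ) (β y L ε a : ℝ)
    (hP : ConvexOn ℝ univ P) (hy : 0 < y) (hL : 0 ≤ L) (hε : 0 ≤ ε)
    (f' f'' : ℝ → ℝ)
    (hf' : ∀ t ∈ Icc (β - y) (β + y), HasDerivAt f (f' t) t)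
    (hf'' : ∀ t ∈ Icc (β - y) (β + y), HasDerivAt f' (f'' t) t)
    (hbound : ∀ t ∈ Icc (β - y) (β + y), |f'' t| ≤ L)
    (hPf : ∀ t ∈ Icc (β - y) (β + y), P t ≤ f t)
    (hfP : f β - P β ≤ ε)
    (ha : ∀ t : ℝ, a * (t - β) ≤ P t - P β) :
    f' β - L * y / 2 - ε / y ≤ a ∧ a ≤ f' β + L * y / 2 + ε / y := by
  have hβ : β ∈ Icc (β - y) (β + y) := ⟨by linarith, by linarith⟩
  -- f' is L-Lipschitz on the interval
  have hlip : ∀ t ∈ Icc (β - y) (β + y), |f' t - f' β| ≤ L * |t - β| := by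
    intro t ht
    have := (convex_Icc (β - y) (β + y)).norm_image_sub_le_of_norm_hasDerivWithin_le
      (fun x hx => (hf'' x hx).hasDerivWithinAt) (fun x hx => by
        simpa [Real.norm_eq_abs] using hbound x hx) hβ ht
    simpa [Real.norm_eq_abs] using this
  set g : ℝ → ℝ := fun t => f β + f' β * (t - β) + L / 2 * (t - β) ^ 2 - f t with hgdef
  have hg : ∀ t ∈ Icc (β - y) (β + y),
      HasDerivAt g (f' β + L * (t - β) - f' t) t := by
    intro t ht
    have hid : HasDerivAt (fun x : ℝ => x - β) 1 t := (hasDerivAt_id t).sub_const β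
    have hsq : HasDerivAt (fun x : ℝ => (x - β) ^ 2) (2 * (t - β)) t := by
      have := hid.fun_pow 2
      simpa using this
    have h1 : HasDerivAt (fun x : ℝ => f β + f' β * (x - β) + L / 2 * (x - β) ^ 2 - f x)
        (0 + f' β * 1 + L / 2 * (2 * (t - β)) - f' t) t :=
      (((hasDerivAt_const t (f β)).add (hid.const_mul (f' β))).add
        (hsq.const_mul (L / 2))).sub (hf' t ht)
    convert h1 using 1
    ring
  have hgβ : g β = 0 := by simp [hgdef]
  -- upper Taylor bound on the right
  have hsub1 : Icc β (β + y) ⊆ Icc (β - y) (β + y) := Icc_subset_Icc (by linarith) le_rfl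
  have hmono : MonotoneOn g (Icc β (β + y)) := by
    apply monotoneOn_of_deriv_nonneg (convex_Icc β (β + y))
    · exact fun t ht => (hg t (hsub1 ht)).continuousAt.continuousWithinAt
    · exact fun t ht =>
        ((hg t (hsub1 (interior_subset ht))).differentiableAt).differentiableWithinAt
    · intro t ht
      rw [interior_Icc] at ht
      have ht' : t ∈ Icc (β - y) (β + y) := hsub1 ⟨le_of_lt ht.1, le_of_lt ht.2⟩
      rw [(hg t ht').deriv]
      have h := hlip t ht'
      rw [abs_of_nonneg (by linarith [ht.1] : (0:ℝ) ≤ t - β)] at h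
      have := (abs_le.mp h).2
      linarith
  have hright : f (β + y) ≤ f β + f' β * y + L / 2 * y ^ 2 := by
    have := hmono (left_mem_Icc.mpr (by linarith)) (right_mem_Icc.mpr (by linarith))
      (by linarith : β ≤ β + y)
    rw [hgβ] at this
    simp only [hgdef] at this
    nlinarith [this]
  -- upper Taylor bound on the left
  have hsub2 : Icc (β - y) β ⊆ Icc (β - y) (β + y) := Icc_subset_Icc le_rfl (by linarith)
  have hanti : AntitoneOn g (Icc (β - y) β) := by
    apply antitoneOn_of_deriv_nonpos (convex_Icc (β - y) β)
    · exact fun t ht => (hg t (hsub2 ht)).continuousAt.continuousWithinAt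
    · exact fun t ht =>
        ((hg t (hsub2 (interior_subset ht))).differentiableAt).differentiableWithinAt
    · intro t ht
      rw [interior_Icc] at ht
      have ht' : t ∈ Icc (β - y) (β + y) := hsub2 ⟨le_of_lt ht.1, le_of_lt ht.2⟩
      rw [(hg t ht').deriv]
      have h := hlip t ht'
      rw [abs_of_nonpos (by linarith [ht.2] : t - β ≤ 0)] at h
      have := (abs_le.mp h).1
      linarith
  have hleft : f (β - y) ≤ f β - f' β * y + L / 2 * y ^ 2 := by
    have := hanti (left_mem_Icc.mpr (by linarith)) (right_mem_Icc.mpr (by linarith))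
      (by linarith : β - y ≤ β)
    rw [hgβ] at this
    simp only [hgdef] at this
    nlinarith [this]
  have hεy : ε / y * y = ε := div_mul_cancel₀ ε hy.ne'
  constructor
  · -- lower bound using t = β - y
    have h1 := ha (β - y)
    have h2 := hPf (β - y) ⟨le_rfl, by linarith⟩
    have key : a * (-y) ≤ -f' β * y + L / 2 * y ^ 2 + ε := by
      have : a * (β - y - β) ≤ f (β - y) - P β := le_trans h1 (by linarith)
      have h3 : a * (β - y - β) = a * (-y) := by ring
      rw [h3] at this
      linarith
    nlinarith [mul_pos hy hy]
  · -- upper bound using t = β + y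
    have h1 := ha (β + y)
    have h2 := hPf (β + y) ⟨by linarith, le_rfl⟩
    have key : a * y ≤ f' β * y + L / 2 * y ^ 2 + ε := by
      have : a * (β + y - β) ≤ f (β + y) - P β := le_trans h1 (by linarith)
      have h3 : a * (β + y - β) = a * y := by ring
      rw [h3] at this
      linarith
    nlinarith [mul_pos hy hy]
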